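/- arXiv:2510.25670 — 3 statements merged into one kernel-verified Lean document; each statement's English description precedes it below -/
import Mathlib

section
/- Let A be an n×n real symmetric positive semidefinite matrix with 1 ≤ p < n and δ_p := λ_p − λ_{p+1} > 0, and let E be any n×n real symmetric matrix. Let Γ be the boundary of the rectangle [λ_p − δ_p/2, 2λ_1] × [−2λ_1, 2λ_1] in ℂ. Then ∮_Γ ‖(zI − A)⁻¹ E (zI − A)⁻¹‖ |dz| ≤ 4π‖E‖/δ_p. -/
open Matrix Real

/-- The spectral norm (operator norm induced by the Euclidean norm) of a real matrix. -/
noncomputable def specNormR {n : ℕ} (M : Matrix (Fin n) (Fin n) ℝ) : ℝ :=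
  ‖Matrix.toEuclideanCLM (𝕜 := ℝ) M‖

/-- The spectral norm (operator norm induced by the Euclidean norm) of a complex matrix. -/
noncomputable def specNormC {n : ℕ} (M : Matrix (Fin n) (Fin n) ℂ) : ℝ :=
  ‖Matrix.toEuclideanCLM (𝕜 := ℂ) M‖

/-- The resolvent `(zI − M)⁻¹` of a real matrix `M` regarded as a complex matrix. -/
noncomputable def resolv {n : ℕ} (M : Matrix (Fin n) (Fin n) ℝ) (z : ℂ) :
    Matrix (Fin n) (Fin n) ℂ :=
  (z • (1 : Matrix (Fin n) (Fin n) ℂ) - M.map (Complex.ofReal))⁻¹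

/-- `∮_Γ h(z) |dz|` over the boundary `Γ` of the rectangle `[x₀, x₁] × [−T, T]`:
the sum of the four arclength integrals over the sides. -/
noncomputable def rectInt (x₀ x₁ T : ℝ) (h : ℂ → ℝ) : ℝ :=
  (∫ t in (-T)..T, h ((x₀ : ℂ) + (t : ℂ) * Complex.I)) +
    (∫ t in (-T)..T, h ((x₁ : ℂ) + (t : ℂ) * Complex.I)) +
    (∫ x in x₀..x₁, h ((x : ℂ) + (T : ℂ) * Complex.I)) +
    (∫ x in x₀..x₁, h ((x : ℂ) - (T : ℂ) * Complex.I))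


lemma toEuclideanCLM_apply {n : ℕ} (M : Matrix (Fin n) (Fin n) ℂ) (x : EuclideanSpace ℂ (Fin n)) (i : Fin n) :
    (Matrix.toEuclideanCLM (𝕜 := ℂ) M x) i = M.mulVec (fun j => x j) i := by
  have := Matrix.ofLp_toEuclideanCLM (𝕜 := ℂ) M x
  have h2 := congrFun this i
  simpa [Matrix.toLin'_apply] using h2

lemma norm_sq_eucl {n : ℕ} (x : EuclideanSpace ℂ (Fin n)) :
    ‖x‖ ^ 2 = ∑ i, ‖x i‖ ^ 2 := by
  rw [EuclideanSpace.norm_eq, Real.sq_sqrt]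
  positivity

lemma specNormC_le_of_bound {n : ℕ} (M : Matrix (Fin n) (Fin n) ℂ) (c : ℝ) (hc : 0 ≤ c)
    (h : ∀ x : EuclideanSpace ℂ (Fin n), ‖Matrix.toEuclideanCLM (𝕜 := ℂ) M x‖ ≤ c * ‖x‖) :
    ‖Matrix.toEuclideanCLM (𝕜 := ℂ) M‖ ≤ c :=
  ContinuousLinearMap.opNorm_le_bound _ hc h

lemma specNormC_diagonal_le {n : ℕ} (d : Fin n → ℂ) (c : ℝ) (hc : 0 ≤ c)
    (h : ∀ i, ‖d i‖ ≤ c) :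
    ‖Matrix.toEuclideanCLM (𝕜 := ℂ) (Matrix.diagonal d)‖ ≤ c := by
  refine specNormC_le_of_bound _ c hc fun x => ?_
  have h1 : ‖Matrix.toEuclideanCLM (𝕜 := ℂ) (Matrix.diagonal d) x‖ ^ 2 ≤ (c * ‖x‖) ^ 2 := by
    rw [norm_sq_eucl, mul_pow, norm_sq_eucl, Finset.mul_sum]
    refine Finset.sum_le_sum fun i _ => ?_
    rw [toEuclideanCLM_apply, Matrix.mulVec_diagonal]
    calc ‖d i * x i‖ ^ 2 = ‖d i‖ ^ 2 * ‖x i‖ ^ 2 := by rw [norm_mul, mul_pow]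
      _ ≤ c ^ 2 * ‖x i‖ ^ 2 := by
          have := h i
          gcongr
  exact (pow_le_pow_iff_left₀ (norm_nonneg _) (by positivity) two_ne_zero).mp h1

lemma toEuclideanCLM_applyR {n : ℕ} (M : Matrix (Fin n) (Fin n) ℝ) (x : EuclideanSpace ℝ (Fin n)) (i : Fin n) :
    (Matrix.toEuclideanCLM (𝕜 := ℝ) M x) i = M.mulVec (fun j => x j) i := by
  have := Matrix.ofLp_toEuclideanCLM (𝕜 := ℝ) M x
  have h2 := congrFun this i
  simpa [Matrix.toLin'_apply] using h2

lemma norm_sq_euclR {n : ℕ} (x : EuclideanSpace ℝ (Fin n)) :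
    ‖x‖ ^ 2 = ∑ i, ‖x i‖ ^ 2 := by
  rw [EuclideanSpace.norm_eq, Real.sq_sqrt]
  positivity

lemma specNormC_map_le {n : ℕ} (M : Matrix (Fin n) (Fin n) ℝ) :
    ‖Matrix.toEuclideanCLM (𝕜 := ℂ) (M.map Complex.ofReal)‖ ≤
      ‖Matrix.toEuclideanCLM (𝕜 := ℝ) M‖ := by
  refine specNormC_le_of_bound _ _ (norm_nonneg _) fun x => ?_
  set C := ‖Matrix.toEuclideanCLM (𝕜 := ℝ) M‖ with hC
  set a : EuclideanSpace ℝ (Fin n) := (WithLp.equiv 2 _).symm (fun i => (x i).re) with ha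
  set b : EuclideanSpace ℝ (Fin n) := (WithLp.equiv 2 _).symm (fun i => (x i).im) with hb
  have haap : ∀ i, a i = (x i).re := fun i => rfl
  have hbap : ∀ i, b i = (x i).im := fun i => rfl
  have hre : ∀ i, ((Matrix.toEuclideanCLM (𝕜 := ℂ) (M.map Complex.ofReal) x) i).re
      = (Matrix.toEuclideanCLM (𝕜 := ℝ) M a) i := by
    intro i
    rw [toEuclideanCLM_apply, toEuclideanCLM_applyR, Matrix.mulVec, Matrix.mulVec,
      dotProduct, dotProduct, Complex.re_sum]
    exact Finset.sum_congr rfl fun j _ => by simp [Matrix.map_apply, Complex.mul_re, haap]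
  have him : ∀ i, ((Matrix.toEuclideanCLM (𝕜 := ℂ) (M.map Complex.ofReal) x) i).im
      = (Matrix.toEuclideanCLM (𝕜 := ℝ) M b) i := by
    intro i
    rw [toEuclideanCLM_apply, toEuclideanCLM_applyR, Matrix.mulVec, Matrix.mulVec,
      dotProduct, dotProduct, Complex.im_sum]
    exact Finset.sum_congr rfl fun j _ => by simp [Matrix.map_apply, Complex.mul_im, hbap]
  have hxsq : ‖x‖ ^ 2 = ‖a‖ ^ 2 + ‖b‖ ^ 2 := by
    rw [norm_sq_eucl, norm_sq_euclR, norm_sq_euclR, ← Finset.sum_add_distrib]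
    refine Finset.sum_congr rfl fun i _ => ?_
    rw [haap, hbap]
    simp [Real.norm_eq_abs, sq_abs, Complex.norm_mul_self_eq_normSq, Complex.normSq_apply, pow_two]
  have key : ‖Matrix.toEuclideanCLM (𝕜 := ℂ) (M.map Complex.ofReal) x‖ ^ 2 ≤ (C * ‖x‖) ^ 2 := by
    rw [norm_sq_eucl]
    have : ∀ i, ‖(Matrix.toEuclideanCLM (𝕜 := ℂ) (M.map Complex.ofReal) x) i‖ ^ 2
        = ((Matrix.toEuclideanCLM (𝕜 := ℝ) M a) i) ^ 2
          + ((Matrix.toEuclideanCLM (𝕜 := ℝ) M b) i) ^ 2 := by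
      intro i
      rw [← hre, ← him]
      simp [Complex.norm_mul_self_eq_normSq, Complex.normSq_apply, pow_two]
    rw [Finset.sum_congr rfl fun i _ => this i, Finset.sum_add_distrib]
    have hMa : ∑ i, ((Matrix.toEuclideanCLM (𝕜 := ℝ) M a) i) ^ 2 ≤ (C * ‖a‖) ^ 2 := by
      have h1 := (Matrix.toEuclideanCLM (𝕜 := ℝ) M).le_opNorm a
      have h2 : ‖Matrix.toEuclideanCLM (𝕜 := ℝ) M a‖ ^ 2 ≤ (C * ‖a‖) ^ 2 := by
        apply pow_le_pow_left₀ (norm_nonneg _) h1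
      rw [norm_sq_euclR] at h2
      simpa [Real.norm_eq_abs, sq_abs] using h2
    have hMb : ∑ i, ((Matrix.toEuclideanCLM (𝕜 := ℝ) M b) i) ^ 2 ≤ (C * ‖b‖) ^ 2 := by
      have h1 := (Matrix.toEuclideanCLM (𝕜 := ℝ) M).le_opNorm b
      have h2 : ‖Matrix.toEuclideanCLM (𝕜 := ℝ) M b‖ ^ 2 ≤ (C * ‖b‖) ^ 2 := by
        apply pow_le_pow_left₀ (norm_nonneg _) h1
      rw [norm_sq_euclR] at h2
      simpa [Real.norm_eq_abs, sq_abs] using h2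
    calc _ ≤ (C * ‖a‖) ^ 2 + (C * ‖b‖) ^ 2 := add_le_add hMa hMb
      _ = C ^ 2 * (‖a‖ ^ 2 + ‖b‖ ^ 2) := by ring
      _ = (C * ‖x‖) ^ 2 := by rw [← hxsq]; ring
  exact (pow_le_pow_iff_left₀ (norm_nonneg _) (by positivity) two_ne_zero).mp key

lemma norm_one_clm {n : ℕ} (hn : 0 < n) :
    ‖(1 : EuclideanSpace ℂ (Fin n) →L[ℂ] EuclideanSpace ℂ (Fin n))‖ = 1 := by
  haveI : Nontrivial (EuclideanSpace ℂ (Fin n)) := by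
    refine ⟨EuclideanSpace.single ⟨0, hn⟩ (1 : ℂ), 0, fun h => ?_⟩
    have h2 : ‖EuclideanSpace.single (⟨0, hn⟩ : Fin n) (1 : ℂ)‖ = 1 := by
      rw [EuclideanSpace.norm_single]; simp
    rw [h] at h2; simp at h2
  exact ContinuousLinearMap.norm_id

lemma resolv_repr {n : ℕ} (A : Matrix (Fin n) (Fin n) ℝ) (hAs : A.IsSymm)
    (lam : Fin n → ℝ) (u : Fin n → (Fin n → ℝ))
    (hu : ∀ i j : Fin n, u i ⬝ᵥ u j = if i = j then (1 : ℝ) else 0)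
    (heig : ∀ i, A.mulVec (u i) = lam i • u i)
    (z : ℂ) (hz : ∀ i, z - (lam i : ℂ) ≠ 0) :
    ∃ Uc : Matrix (Fin n) (Fin n) ℂ,
      Uc * Ucᵀ = 1 ∧ Ucᵀ * Uc = 1 ∧ Ucᴴ = Ucᵀ ∧
      (z • (1 : Matrix (Fin n) (Fin n) ℂ) - A.map Complex.ofReal).det ≠ 0 ∧
      resolv A z = Ucᵀ * Matrix.diagonal (fun i => (z - (lam i : ℂ))⁻¹) * Uc := by
  classical
  set Ur : Matrix (Fin n) (Fin n) ℝ := Matrix.of u with hUr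
  have hU1 : Ur * Urᵀ = 1 := by
    ext i j
    have := hu i j
    simp only [dotProduct] at this
    simp [Matrix.mul_apply, Matrix.transpose_apply, Matrix.one_apply, hUr, this]
  have hU2 : Urᵀ * Ur = 1 := mul_eq_one_comm.mp hU1
  have hUA : Ur * A = Matrix.diagonal lam * Ur := by
    ext i j
    have h1 : (Ur * A) i j = A.mulVec (u i) j := by
      simp only [Matrix.mul_apply, Matrix.mulVec, dotProduct, hUr, Matrix.of_apply]
      exact Finset.sum_congr rfl fun k _ => by rw [hAs.apply j k, mul_comm]
    rw [h1, heig i]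
    simp [Matrix.diagonal_mul, hUr]
  -- complexification helpers
  have hmapmul : ∀ M N : Matrix (Fin n) (Fin n) ℝ,
      (M * N).map Complex.ofReal = M.map Complex.ofReal * N.map Complex.ofReal :=
    fun M N => Matrix.map_mul (f := Complex.ofRealHom)
  have hmapone : (1 : Matrix (Fin n) (Fin n) ℝ).map Complex.ofReal = 1 :=
    Matrix.map_one _ Complex.ofReal_zero Complex.ofReal_one
  set Uc : Matrix (Fin n) (Fin n) ℂ := Ur.map Complex.ofReal with hUc
  set Ac : Matrix (Fin n) (Fin n) ℂ := A.map Complex.ofReal with hAcd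
  have hTc : Urᵀ.map Complex.ofReal = Ucᵀ := Matrix.transpose_map
  have hU1c : Uc * Ucᵀ = 1 := by
    have h := congrArg (fun M => M.map Complex.ofReal) hU1
    simp only [hmapmul, hTc, hmapone] at h
    exact h
  have hU2c : Ucᵀ * Uc = 1 := mul_eq_one_comm.mp hU1c
  have hUAc : Uc * Ac = Matrix.diagonal (fun i => (lam i : ℂ)) * Uc := by
    have h := congrArg (fun M => M.map Complex.ofReal) hUA
    simp only [hmapmul] at h
    rwa [Matrix.diagonal_map Complex.ofReal_zero] at h
  have hAc : Ac = Ucᵀ * Matrix.diagonal (fun i => (lam i : ℂ)) * Uc := by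
    calc Ac = (Ucᵀ * Uc) * Ac := by rw [hU2c, one_mul]
      _ = Ucᵀ * (Uc * Ac) := by rw [mul_assoc]
      _ = Ucᵀ * (Matrix.diagonal (fun i => (lam i : ℂ)) * Uc) := by rw [hUAc]
      _ = _ := by rw [mul_assoc]
  have key : Ucᵀ * Matrix.diagonal (fun i => z - (lam i : ℂ)) * Uc = z • 1 - Ac := by
    have hD : Matrix.diagonal (fun i => z - (lam i : ℂ))
        = z • (1 : Matrix (Fin n) (Fin n) ℂ) - Matrix.diagonal (fun i => (lam i : ℂ)) := by
      ext i j
      by_cases h : i = j <;>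
        simp [Matrix.diagonal_apply, Matrix.one_apply, Matrix.smul_apply, h]
    rw [hD, Matrix.mul_sub, Matrix.sub_mul]
    congr 1
    · rw [mul_smul_comm, mul_one, Matrix.smul_mul, hU2c]
    · exact hAc.symm
  have hDD : Matrix.diagonal (fun i => z - (lam i : ℂ))
      * Matrix.diagonal (fun i => (z - (lam i : ℂ))⁻¹) = 1 := by
    rw [Matrix.diagonal_mul_diagonal]
    have : (fun i => (z - (lam i : ℂ)) * (z - (lam i : ℂ))⁻¹) = fun _ => (1 : ℂ) :=
      funext fun i => mul_inv_cancel₀ (hz i)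
    rw [this, Matrix.diagonal_one]
  have hRight : (z • (1 : Matrix (Fin n) (Fin n) ℂ) - Ac)
      * (Ucᵀ * Matrix.diagonal (fun i => (z - (lam i : ℂ))⁻¹) * Uc) = 1 := by
    rw [← key]
    calc (Ucᵀ * Matrix.diagonal (fun i => z - (lam i : ℂ)) * Uc)
          * (Ucᵀ * Matrix.diagonal (fun i => (z - (lam i : ℂ))⁻¹) * Uc)
        = Ucᵀ * Matrix.diagonal (fun i => z - (lam i : ℂ)) * ((Uc * Ucᵀ)
          * (Matrix.diagonal (fun i => (z - (lam i : ℂ))⁻¹) * Uc)) := by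
          simp only [mul_assoc]
      _ = Ucᵀ * (Matrix.diagonal (fun i => z - (lam i : ℂ))
          * Matrix.diagonal (fun i => (z - (lam i : ℂ))⁻¹)) * Uc := by
          rw [hU1c, one_mul]; simp only [mul_assoc]
      _ = 1 := by rw [hDD, mul_one, hU2c]
  refine ⟨Uc, hU1c, hU2c, ?_, ?_, ?_⟩
  · ext i j
    simp [Matrix.conjTranspose_apply, Matrix.transpose_apply, hUc, Matrix.map_apply,
      Complex.conj_ofReal]
  · exact Matrix.det_ne_zero_of_right_inverse hRight
  · rw [resolv, ← hAcd]
    exact Matrix.inv_eq_right_inv hRight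

set_option synthInstance.maxHeartbeats 1000000 in
set_option maxHeartbeats 1000000 in
lemma clm_norm_one_of_unitary {n : ℕ} (hn : 0 < n) (M : Matrix (Fin n) (Fin n) ℂ)
    (h : star M * M = 1) : ‖Matrix.toEuclideanCLM (𝕜 := ℂ) M‖ = 1 := by
  have hsa : star (Matrix.toEuclideanCLM (𝕜 := ℂ) M) * Matrix.toEuclideanCLM (𝕜 := ℂ) M = 1 := by
    rw [← map_star, ← _root_.map_mul, h, _root_.map_one]
  have hnn : ‖Matrix.toEuclideanCLM (𝕜 := ℂ) M‖ * ‖Matrix.toEuclideanCLM (𝕜 := ℂ) M‖ = 1 := by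
    rw [← CStarRing.norm_star_mul_self, hsa, norm_one_clm hn]
  have h0 : (‖Matrix.toEuclideanCLM (𝕜 := ℂ) M‖ - 1) * (‖Matrix.toEuclideanCLM (𝕜 := ℂ) M‖ + 1) = 0 := by
    nlinarith
  rcases mul_eq_zero.mp h0 with h' | h'
  · linarith
  · have := norm_nonneg (Matrix.toEuclideanCLM (𝕜 := ℂ) M); linarith

set_option synthInstance.maxHeartbeats 1000000 in
set_option maxHeartbeats 1000000 in
lemma resolv_norm_le {n : ℕ} (hn : 0 < n) (A : Matrix (Fin n) (Fin n) ℝ) (hAs : A.IsSymm)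
    (lam : Fin n → ℝ) (u : Fin n → (Fin n → ℝ))
    (hu : ∀ i j : Fin n, u i ⬝ᵥ u j = if i = j then (1 : ℝ) else 0)
    (heig : ∀ i, A.mulVec (u i) = lam i • u i)
    (z : ℂ) (c : ℝ) (hc : 0 < c) (hz : ∀ i, c ≤ ‖z - (lam i : ℂ)‖) :
    ‖Matrix.toEuclideanCLM (𝕜 := ℂ) (resolv A z)‖ ≤ c⁻¹ := by
  have hz' : ∀ i, z - (lam i : ℂ) ≠ 0 := by
    intro i h
    have := hz i
    rw [h] at this
    simp at this
    linarith
  obtain ⟨Uc, h1, h2, hH, _, hrepr⟩ := resolv_repr A hAs lam u hu heig z hz'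
  set a := Matrix.toEuclideanCLM (𝕜 := ℂ) Uc with ha
  have hUnorm : ‖a‖ = 1 := by
    refine clm_norm_one_of_unitary hn Uc ?_
    rw [Matrix.star_eq_conjTranspose, hH, h2]
  have hUTnorm : ‖Matrix.toEuclideanCLM (𝕜 := ℂ) Ucᵀ‖ = 1 := by
    refine clm_norm_one_of_unitary hn Ucᵀ ?_
    rw [Matrix.star_eq_conjTranspose]
    have : Ucᵀᴴ = Uc := by rw [← hH, Matrix.conjTranspose_conjTranspose]
    rw [this, h1]
  have hdiag : ‖Matrix.toEuclideanCLM (𝕜 := ℂ)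
      (Matrix.diagonal (fun i => (z - (lam i : ℂ))⁻¹))‖ ≤ c⁻¹ := by
    refine specNormC_diagonal_le _ _ (by positivity) fun i => ?_
    rw [norm_inv]
    exact inv_anti₀ hc (hz i)
  calc ‖Matrix.toEuclideanCLM (𝕜 := ℂ) (resolv A z)‖
      = ‖(Matrix.toEuclideanCLM (𝕜 := ℂ) Ucᵀ
          * Matrix.toEuclideanCLM (𝕜 := ℂ) (Matrix.diagonal (fun i => (z - (lam i : ℂ))⁻¹)))
          * a‖ := by rw [hrepr, _root_.map_mul, _root_.map_mul]
    _ ≤ ‖Matrix.toEuclideanCLM (𝕜 := ℂ) Ucᵀ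
          * Matrix.toEuclideanCLM (𝕜 := ℂ) (Matrix.diagonal (fun i => (z - (lam i : ℂ))⁻¹))‖
          * ‖a‖ := norm_mul_le _ _
    _ ≤ (‖Matrix.toEuclideanCLM (𝕜 := ℂ) Ucᵀ‖
          * ‖Matrix.toEuclideanCLM (𝕜 := ℂ) (Matrix.diagonal (fun i => (z - (lam i : ℂ))⁻¹))‖)
          * ‖a‖ := mul_le_mul_of_nonneg_right (norm_mul_le _ _) (norm_nonneg _)
    _ ≤ c⁻¹ := by rw [hUnorm, hUTnorm, mul_one, one_mul]; exact hdiag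

noncomputable def clmL (n : ℕ) :
    Matrix (Fin n) (Fin n) ℂ →ₗ[ℂ] (EuclideanSpace ℂ (Fin n) →L[ℂ] EuclideanSpace ℂ (Fin n)) where
  toFun := fun N => Matrix.toEuclideanCLM (𝕜 := ℂ) N
  map_add' := fun x y => map_add _ x y
  map_smul' := fun c x => map_smul _ c x

lemma clmL_continuous (n : ℕ) : Continuous fun N : Matrix (Fin n) (Fin n) ℂ =>
    Matrix.toEuclideanCLM (𝕜 := ℂ) N :=
  (clmL n).continuous_of_finiteDimensional


lemma ContinuousOn.matrix_elem' {X : Type*} [TopologicalSpace X] {n : ℕ}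
    {f : X → Matrix (Fin n) (Fin n) ℂ} {s : Set X} (hf : ContinuousOn f s) (i j : Fin n) :
    ContinuousOn (fun x => f x i j) s :=
  (continuous_apply j).comp_continuousOn ((continuous_apply i).comp_continuousOn hf)

lemma ContinuousOn.matrix_mul'' {X : Type*} [TopologicalSpace X] {n : ℕ}
    {f g : X → Matrix (Fin n) (Fin n) ℂ} {s : Set X}
    (hf : ContinuousOn f s) (hg : ContinuousOn g s) :
    ContinuousOn (fun x => f x * g x) s := by
  refine continuousOn_pi.2 fun i => continuousOn_pi.2 fun j => ?_
  have : ∀ x, (f x * g x) i j = ∑ k, f x i k * g x k j := fun x => Matrix.mul_apply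
  simp only [this]
  exact continuousOn_finset_sum _ fun k _ => (hf.matrix_elem' i k).mul (hg.matrix_elem' k j)

lemma contOn_norm_clm {X : Type*} [TopologicalSpace X] {n : ℕ}
    {f : X → Matrix (Fin n) (Fin n) ℂ} {s : Set X} (hf : ContinuousOn f s) :
    ContinuousOn (fun x => ‖Matrix.toEuclideanCLM (𝕜 := ℂ) (f x)‖) s :=
  ((clmL_continuous n).comp_continuousOn hf).norm

lemma hfun_continuousOn {n : ℕ} (A : Matrix (Fin n) (Fin n) ℝ) (E : Matrix (Fin n) (Fin n) ℂ) :
    ContinuousOn (fun z => ‖Matrix.toEuclideanCLM (𝕜 := ℂ) (resolv A z * E * resolv A z)‖)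
      {z : ℂ | (z • (1 : Matrix (Fin n) (Fin n) ℂ) - A.map Complex.ofReal).det ≠ 0} := by
  classical
  set M : ℂ → Matrix (Fin n) (Fin n) ℂ :=
    fun z => z • (1 : Matrix (Fin n) (Fin n) ℂ) - A.map Complex.ofReal with hM
  have hMc : Continuous M := by
    apply Continuous.sub _ continuous_const
    exact continuous_id.smul continuous_const
  have hdet : Continuous fun z => (M z).det := hMc.matrix_det
  have hadj : Continuous fun z => (M z).adjugate := hMc.matrix_adjugate
  have hinv : ContinuousOn (fun z => ((M z).det)⁻¹)
      {z : ℂ | (M z).det ≠ 0} :=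
    ContinuousOn.inv₀ hdet.continuousOn (fun z hz => hz)
  have hres : ContinuousOn (fun z => resolv A z) {z : ℂ | (M z).det ≠ 0} := by
    have heq : ∀ z, resolv A z = ((M z).det)⁻¹ • (M z).adjugate := by
      intro z
      rw [resolv, Matrix.inv_def, Ring.inverse_eq_inv]
    simp only [heq]
    exact hinv.smul hadj.continuousOn
  have hprod : ContinuousOn (fun z => resolv A z * E * resolv A z)
      {z : ℂ | (M z).det ≠ 0} := by
    exact (hres.matrix_mul'' continuousOn_const).matrix_mul'' hres
  exact contOn_norm_clm hprod

lemma integral_inv_sq_add_sq' (a T : ℝ) (ha : 0 < a) :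
    ∫ t in (-T)..T, (a ^ 2 + t ^ 2)⁻¹ = (2 / a) * arctan (T / a) := by
  have hF : ∀ t : ℝ, HasDerivAt (fun s => (1 / a) * arctan (s / a)) ((a ^ 2 + t ^ 2)⁻¹) t := by
    intro t
    have h1 : HasDerivAt (fun s : ℝ => s / a) (1 / a) t := (hasDerivAt_id t).div_const a
    have h2 := (Real.hasDerivAt_arctan (t / a)).comp t h1
    have h3 := h2.const_mul (1 / a)
    refine h3.congr_deriv ?_
    have ha0 : a ≠ 0 := ha.ne'
    field_simp
  have hint : IntervalIntegrable (fun t : ℝ => (a ^ 2 + t ^ 2)⁻¹) MeasureTheory.volume (-T) T := by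
    apply Continuous.intervalIntegrable
    have : ∀ t : ℝ, a ^ 2 + t ^ 2 ≠ 0 := fun t => by positivity
    exact (continuous_const.add (continuous_id.pow 2)).inv₀ this
  rw [intervalIntegral.integral_eq_sub_of_hasDerivAt (fun t _ => hF t) hint]
  rw [neg_div, Real.arctan_neg]
  ring

lemma arctan_ge_half {y : ℝ} (h0 : 0 ≤ y) (h1 : y ≤ 1) : y / 2 ≤ arctan y := by
  have hs : Real.sin (Real.arctan y) = y / Real.sqrt (1 + y ^ 2) := Real.sin_arctan y
  have hle : Real.sin (Real.arctan y) ≤ Real.arctan y :=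
    Real.sin_le (by rw [← Real.arctan_zero]; exact Real.arctan_strictMono.monotone h0)
  have hsqrt_pos : 0 < Real.sqrt (1 + y ^ 2) := Real.sqrt_pos.2 (by positivity)
  have hsqrt : Real.sqrt (1 + y ^ 2) ≤ 2 := by
    have h4 : (1 + y ^ 2 : ℝ) ≤ 4 := by nlinarith
    calc Real.sqrt (1 + y ^ 2) ≤ Real.sqrt 4 := Real.sqrt_le_sqrt h4
      _ = 2 := by rw [show (4 : ℝ) = 2 ^ 2 by norm_num, Real.sqrt_sq (by norm_num)]
  have : y / 2 ≤ y / Real.sqrt (1 + y ^ 2) := by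
    rw [div_le_div_iff₀ (by norm_num) hsqrt_pos]
    exact mul_le_mul_of_nonneg_left hsqrt h0
  linarith [hs ▸ hle]

set_option maxHeartbeats 1000000 in
set_option synthInstance.maxHeartbeats 400000 in
/-- For `A` PSD with eigengap `δ_p > 0`, `E` symmetric, and `Γ` the
boundary of the rectangle `[λ_p − δ_p/2, 2λ₁] × [−2λ₁, 2λ₁]`,
`∮_Γ ‖(zI−A)⁻¹ E (zI−A)⁻¹‖ |dz| ≤ 4π‖E‖/δ_p`. -/
theorem stmt6 (n p : ℕ) (hp : 1 ≤ p) (hpn : p < n)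
    (A E : Matrix (Fin n) (Fin n) ℝ)
    (hA : A.PosSemidef) (hE : E.IsSymm)
    (lam : Fin n → ℝ) (u : Fin n → (Fin n → ℝ))
    (hlam : ∀ i j : Fin n, i ≤ j → lam j ≤ lam i)
    (hu : ∀ i j : Fin n, u i ⬝ᵥ u j = if i = j then (1 : ℝ) else 0)
    (heig : ∀ i, A.mulVec (u i) = lam i • u i)
    (δp : ℝ) (hδdef : δp = lam ⟨p - 1, by omega⟩ - lam ⟨p, hpn⟩)
    (hδpos : 0 < δp) :
    rectInt (lam ⟨p - 1, by omega⟩ - δp / 2) (2 * lam ⟨0, by omega⟩) (2 * lam ⟨0, by omega⟩)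
        (fun z => specNormC (resolv A z * E.map (Complex.ofReal) * resolv A z)) ≤
      4 * π * specNormR E / δp := by
  have hn : 0 < n := by omega
  have hAs : A.IsSymm := by
    have h := hA.1
    ext i j
    rw [Matrix.transpose_apply]
    have h2 := congrFun (congrFun h i) j
    simpa using h2
  have hlam0 : ∀ i, 0 ≤ lam i := by
    intro i
    have h := hA.dotProduct_mulVec_nonneg (u i)
    rw [star_trivial, heig i, dotProduct_smul, hu i i] at h
    simpa using h
  set ip : Fin n := ⟨p - 1, by omega⟩ with hipdef
  set iq : Fin n := ⟨p, hpn⟩ with hiqdef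
  set i0 : Fin n := ⟨0, by omega⟩ with hi0def
  have hδ : δp = lam ip - lam iq := hδdef
  have hlp_ge : δp ≤ lam ip := by have := hlam0 iq; linarith
  have hpl0 : lam ip ≤ lam i0 := hlam i0 ip (by rw [Fin.le_def]; simp [hi0def, hipdef])
  have hl0pos : 0 < lam i0 := by linarith
  set K := specNormR E with hKdef
  have hK0 : 0 ≤ K := norm_nonneg _
  set a : ℝ := δp / 2 with hadef
  have ha : 0 < a := by positivity
  set x₀ : ℝ := lam ip - a with hx₀def
  set x₁ : ℝ := 2 * lam i0 with hx₁def
  set T : ℝ := 2 * lam i0 with hTdef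
  have hT : 0 < T := by simp [hTdef]; linarith
  have haT : a ≤ T := by simp [hadef, hTdef]; linarith
  have hx01 : x₀ ≤ x₁ := by simp [hx₀def, hx₁def]; nlinarith
  have hx01T : x₁ - x₀ ≤ T := by simp [hx₀def, hx₁def, hTdef]; nlinarith
  set f : ℂ → ℝ := fun z => specNormC (resolv A z * E.map (Complex.ofReal) * resolv A z)
    with hfdef
  -- pointwise bound
  have hb : ∀ (z : ℂ) (c : ℝ), 0 < c → (∀ i, c ≤ ‖z - (lam i : ℂ)‖) →
      f z ≤ K * (c ^ 2)⁻¹ := by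
    intro z c hc hzc
    have hX := resolv_norm_le hn A hAs lam u hu heig z c hc hzc
    have hY : ‖Matrix.toEuclideanCLM (𝕜 := ℂ) (E.map Complex.ofReal)‖ ≤ K :=
      specNormC_map_le E
    have key : ‖Matrix.toEuclideanCLM (𝕜 := ℂ)
        (resolv A z * E.map (Complex.ofReal) * resolv A z)‖ ≤ K * (c ^ 2)⁻¹ := by
      rw [_root_.map_mul, _root_.map_mul]
      calc ‖Matrix.toEuclideanCLM (𝕜 := ℂ) (resolv A z)
              * Matrix.toEuclideanCLM (𝕜 := ℂ) (E.map Complex.ofReal)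
              * Matrix.toEuclideanCLM (𝕜 := ℂ) (resolv A z)‖
          ≤ ‖Matrix.toEuclideanCLM (𝕜 := ℂ) (resolv A z)
              * Matrix.toEuclideanCLM (𝕜 := ℂ) (E.map Complex.ofReal)‖
              * ‖Matrix.toEuclideanCLM (𝕜 := ℂ) (resolv A z)‖ := norm_mul_le _ _
        _ ≤ (‖Matrix.toEuclideanCLM (𝕜 := ℂ) (resolv A z)‖
              * ‖Matrix.toEuclideanCLM (𝕜 := ℂ) (E.map Complex.ofReal)‖)
              * ‖Matrix.toEuclideanCLM (𝕜 := ℂ) (resolv A z)‖ :=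
            mul_le_mul_of_nonneg_right (norm_mul_le _ _) (norm_nonneg _)
        _ ≤ (c⁻¹ * K) * c⁻¹ := by
            apply mul_le_mul _ hX (norm_nonneg _) (by positivity)
            exact mul_le_mul hX hY (norm_nonneg _) (by positivity)
        _ = K * (c ^ 2)⁻¹ := by rw [sq, mul_inv]; ring
    exact key
  -- determinant nonvanishing
  have hdet : ∀ z : ℂ, (∀ i, z ≠ (lam i : ℂ)) →
      (z • (1 : Matrix (Fin n) (Fin n) ℂ) - A.map Complex.ofReal).det ≠ 0 := by
    intro z hz
    obtain ⟨Uc, -, -, -, hd, -⟩ :=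
      resolv_repr A hAs lam u hu heig z (fun i => sub_ne_zero.2 (hz i))
    exact hd
  have hfc : ContinuousOn f
      {z : ℂ | (z • (1 : Matrix (Fin n) (Fin n) ℂ) - A.map Complex.ofReal).det ≠ 0} :=
    hfun_continuousOn A (E.map Complex.ofReal)
  -- vertical sides: lower bounds for |z - λᵢ|
  have hsqrt_pos : ∀ t : ℝ, 0 < Real.sqrt (a ^ 2 + t ^ 2) :=
    fun t => Real.sqrt_pos.2 (by positivity)
  have habs_vert : ∀ (x : ℝ), (∀ i, a ≤ |x - lam i|) → ∀ (t : ℝ) (i : Fin n),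
      Real.sqrt (a ^ 2 + t ^ 2) ≤ ‖(x : ℂ) + (t : ℂ) * Complex.I - (lam i : ℂ)‖ := by
    intro x hx t i
    have hre : ((x : ℂ) + (t : ℂ) * Complex.I - (lam i : ℂ)).re = x - lam i := by simp
    have him : ((x : ℂ) + (t : ℂ) * Complex.I - (lam i : ℂ)).im = t := by simp
    rw [Complex.norm_def]
    apply Real.sqrt_le_sqrt
    rw [Complex.normSq_apply, hre, him]
    have h1 := hx i
    have h2 : a ^ 2 ≤ (x - lam i) ^ 2 := by
      have := abs_nonneg (x - lam i)
      nlinarith [sq_abs (x - lam i)]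
    nlinarith
  have hleft_abs : ∀ i, a ≤ |x₀ - lam i| := by
    intro i
    rcases lt_or_ge i.val p with h | h
    · have h1 : lam ip ≤ lam i := hlam i ip (by rw [Fin.le_def]; simp only [hipdef]; omega)
      rw [abs_sub_comm, abs_of_nonneg (by simp [hx₀def]; linarith)]
      simp [hx₀def]; linarith
    · have h1 : lam i ≤ lam iq := hlam iq i (by rw [Fin.le_def]; simpa [hiqdef] using h)
      rw [abs_of_nonneg (by simp [hx₀def, hadef]; linarith [hδ])]
      simp [hx₀def, hadef]; linarith [hδ]
  have hright_abs : ∀ i, a ≤ |x₁ - lam i| := by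
    intro i
    have h1 : lam i ≤ lam i0 := hlam i0 i (by rw [Fin.le_def]; simp [hi0def])
    rw [abs_of_nonneg (by simp [hx₁def]; linarith)]
    simp [hx₁def]; linarith
  -- horizontal sides
  have habs_horiz : ∀ (s : ℝ), |s| = T → ∀ (x : ℝ) (i : Fin n),
      T ≤ ‖(x : ℂ) + (s : ℂ) * Complex.I - (lam i : ℂ)‖ := by
    intro s hs x i
    have him : ((x : ℂ) + (s : ℂ) * Complex.I - (lam i : ℂ)).im = s := by simp
    have := Complex.abs_im_le_norm ((x : ℂ) + (s : ℂ) * Complex.I - (lam i : ℂ))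
    rw [him, hs] at this
    exact this
  -- membership in the continuity set
  have memV : ∀ (x : ℝ), (∀ i, a ≤ |x - lam i|) → ∀ t : ℝ,
      ((x : ℂ) + (t : ℂ) * Complex.I) ∈
        {z : ℂ | (z • (1 : Matrix (Fin n) (Fin n) ℂ) - A.map Complex.ofReal).det ≠ 0} := by
    intro x hx t
    apply hdet
    intro i heq
    have h1 := habs_vert x hx t i
    rw [heq, sub_self] at h1
    simp at h1
    nlinarith [hsqrt_pos t, h1]
  have memH : ∀ (s : ℝ), |s| = T → ∀ x : ℝ,
      ((x : ℂ) + (s : ℂ) * Complex.I) ∈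
        {z : ℂ | (z • (1 : Matrix (Fin n) (Fin n) ℂ) - A.map Complex.ofReal).det ≠ 0} := by
    intro s hs x
    apply hdet
    intro i heq
    have h1 := habs_horiz s hs x i
    rw [heq, sub_self] at h1
    simp at h1
    linarith
  -- integrability
  have hφ : ∀ c : ℝ, Continuous (fun t : ℝ => (t : ℂ) * Complex.I + (c : ℂ)) := by
    intro c
    exact (Complex.continuous_ofReal.mul continuous_const).add continuous_const
  have hφ' : ∀ c : ℝ, Continuous (fun t : ℝ => (c : ℂ) + (t : ℂ) * Complex.I) := by
    intro c
    exact continuous_const.add (Complex.continuous_ofReal.mul continuous_const)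
  have intL : IntervalIntegrable (fun t => f ((x₀ : ℂ) + (t : ℂ) * Complex.I))
      MeasureTheory.volume (-T) T := by
    apply ContinuousOn.intervalIntegrable
    exact hfc.comp ((hφ' x₀).continuousOn) (fun t _ => memV x₀ hleft_abs t)
  have intR : IntervalIntegrable (fun t => f ((x₁ : ℂ) + (t : ℂ) * Complex.I))
      MeasureTheory.volume (-T) T := by
    apply ContinuousOn.intervalIntegrable
    exact hfc.comp ((hφ' x₁).continuousOn) (fun t _ => memV x₁ hright_abs t)
  have intT : IntervalIntegrable (fun x => f ((x : ℂ) + (T : ℂ) * Complex.I))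
      MeasureTheory.volume x₀ x₁ := by
    apply ContinuousOn.intervalIntegrable
    exact hfc.comp ((Complex.continuous_ofReal.add continuous_const).continuousOn)
      (fun x _ => memH T (abs_of_pos hT) x)
  have intB : IntervalIntegrable (fun x => f ((x : ℂ) - (T : ℂ) * Complex.I))
      MeasureTheory.volume x₀ x₁ := by
    apply ContinuousOn.intervalIntegrable
    have hmt : |(-T : ℝ)| = T := by rw [abs_neg, abs_of_pos hT]
    have : ∀ x : ℝ, ((x : ℂ) - (T : ℂ) * Complex.I) = ((x : ℂ) + ((-T : ℝ) : ℂ) * Complex.I) := by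
      intro x; push_cast; ring
    simp only [this]
    exact hfc.comp ((Complex.continuous_ofReal.add continuous_const).continuousOn)
      (fun x _ => memH (-T) hmt x)
  have intg : IntervalIntegrable (fun t : ℝ => K * (a ^ 2 + t ^ 2)⁻¹)
      MeasureTheory.volume (-T) T := by
    apply Continuous.intervalIntegrable
    exact continuous_const.mul ((continuous_const.add (continuous_id.pow 2)).inv₀
      (fun t => (add_pos_of_pos_of_nonneg (pow_pos ha 2) (sq_nonneg _)).ne'))
  -- the four integral bounds
  have hIL : (∫ t in (-T)..T, f ((x₀ : ℂ) + (t : ℂ) * Complex.I))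
      ≤ K * ((2 / a) * arctan (T / a)) := by
    have h1 : (∫ t in (-T)..T, f ((x₀ : ℂ) + (t : ℂ) * Complex.I))
        ≤ ∫ t in (-T)..T, K * (a ^ 2 + t ^ 2)⁻¹ := by
      apply intervalIntegral.integral_mono_on (by linarith) intL intg
      intro t _
      have h2 := hb ((x₀ : ℂ) + (t : ℂ) * Complex.I) (Real.sqrt (a ^ 2 + t ^ 2))
        (hsqrt_pos t) (habs_vert x₀ hleft_abs t)
      rwa [Real.sq_sqrt (by positivity)] at h2
    rwa [intervalIntegral.integral_const_mul, integral_inv_sq_add_sq' a T ha] at h1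
  have hIR : (∫ t in (-T)..T, f ((x₁ : ℂ) + (t : ℂ) * Complex.I))
      ≤ K * ((2 / a) * arctan (T / a)) := by
    have h1 : (∫ t in (-T)..T, f ((x₁ : ℂ) + (t : ℂ) * Complex.I))
        ≤ ∫ t in (-T)..T, K * (a ^ 2 + t ^ 2)⁻¹ := by
      apply intervalIntegral.integral_mono_on (by linarith) intR intg
      intro t _
      have h2 := hb ((x₁ : ℂ) + (t : ℂ) * Complex.I) (Real.sqrt (a ^ 2 + t ^ 2))
        (hsqrt_pos t) (habs_vert x₁ hright_abs t)
      rwa [Real.sq_sqrt (by positivity)] at h2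
    rwa [intervalIntegral.integral_const_mul, integral_inv_sq_add_sq' a T ha] at h1
  have hIT : (∫ x in x₀..x₁, f ((x : ℂ) + (T : ℂ) * Complex.I))
      ≤ (x₁ - x₀) * (K * (T ^ 2)⁻¹) := by
    have h1 : (∫ x in x₀..x₁, f ((x : ℂ) + (T : ℂ) * Complex.I))
        ≤ ∫ _ in x₀..x₁, K * (T ^ 2)⁻¹ := by
      apply intervalIntegral.integral_mono_on hx01 intT intervalIntegrable_const
      intro x _
      exact hb _ T hT (habs_horiz T (abs_of_pos hT) x)
    rwa [intervalIntegral.integral_const, smul_eq_mul] at h1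
  have hIB : (∫ x in x₀..x₁, f ((x : ℂ) - (T : ℂ) * Complex.I))
      ≤ (x₁ - x₀) * (K * (T ^ 2)⁻¹) := by
    have hmt : |(-T : ℝ)| = T := by rw [abs_neg, abs_of_pos hT]
    have hrw : ∀ x : ℝ, ((x : ℂ) - (T : ℂ) * Complex.I) = ((x : ℂ) + ((-T : ℝ) : ℂ) * Complex.I) := by
      intro x; push_cast; ring
    have h1 : (∫ x in x₀..x₁, f ((x : ℂ) - (T : ℂ) * Complex.I))
        ≤ ∫ _ in x₀..x₁, K * (T ^ 2)⁻¹ := by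
      apply intervalIntegral.integral_mono_on hx01 intB intervalIntegrable_const
      intro x _
      rw [hrw x]
      exact hb _ T hT (habs_horiz (-T) hmt x)
    rwa [intervalIntegral.integral_const, smul_eq_mul] at h1
  -- final arithmetic
  have harc1 : arctan (T / a) = π / 2 - arctan (a / T) := by
    have h := Real.arctan_inv_of_pos (show 0 < T / a by positivity)
    rw [inv_div] at h
    linarith
  have harc2 : a / T / 2 ≤ arctan (a / T) := by
    apply arctan_ge_half (by positivity)
    rw [div_le_one hT]
    exact haT
  have hfin : 2 * (K * ((2 / a) * arctan (T / a))) + 2 * ((x₁ - x₀) * (K * (T ^ 2)⁻¹))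
      ≤ 4 * π * K / δp := by
    have hδa : δp = 2 * a := by rw [hadef]; ring
    have e1 : K * ((2 / a) * arctan (T / a)) = π * K / a - (2 * K / a) * arctan (a / T) := by
      rw [harc1]; field_simp
    have e2 : (4 * K / a) * (a / T / 2) = 2 * K / T := by field_simp; ring
    have e3 : (4 * K / a) * (a / T / 2) ≤ (4 * K / a) * arctan (a / T) :=
      mul_le_mul_of_nonneg_left harc2 (by positivity)
    have e4 : 2 * ((x₁ - x₀) * (K * (T ^ 2)⁻¹)) ≤ 2 * (T * (K * (T ^ 2)⁻¹)) := by
      have : (0:ℝ) ≤ K * (T ^ 2)⁻¹ := by positivity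
      nlinarith
    have e5 : 2 * (T * (K * (T ^ 2)⁻¹)) = 2 * K / T := by
      rw [pow_two]
      field_simp
    have e6 : 4 * π * K / δp = 2 * π * K / a := by rw [hδa]; ring_nf
    rw [e6, e1]
    have : 2 * (π * K / a - 2 * K / a * arctan (a / T)) + 2 * ((x₁ - x₀) * (K * (T ^ 2)⁻¹))
        ≤ 2 * (π * K / a) - 2 * (2 * K / a * arctan (a / T)) + 2 * K / T := by
      linarith [e4, e5]
    have h7 : 2 * (2 * K / a * arctan (a / T)) = (4 * K / a) * arctan (a / T) := by ring
    have h8 : 2 * K / T ≤ (4 * K / a) * arctan (a / T) := by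
      rw [← e2]; exact e3
    have h9 : 2 * (π * K / a) = 2 * π * K / a := by ring
    linarith
  calc rectInt x₀ x₁ T f
      = (∫ t in (-T)..T, f ((x₀ : ℂ) + (t : ℂ) * Complex.I)) +
        (∫ t in (-T)..T, f ((x₁ : ℂ) + (t : ℂ) * Complex.I)) +
        (∫ x in x₀..x₁, f ((x : ℂ) + (T : ℂ) * Complex.I)) +
        (∫ x in x₀..x₁, f ((x : ℂ) - (T : ℂ) * Complex.I)) := by rw [rectInt]
    _ ≤ K * ((2 / a) * arctan (T / a)) + K * ((2 / a) * arctan (T / a))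
        + (x₁ - x₀) * (K * (T ^ 2)⁻¹) + (x₁ - x₀) * (K * (T ^ 2)⁻¹) := by
        exact add_le_add (add_le_add (add_le_add hIL hIR) hIT) hIB
    _ ≤ 4 * π * K / δp := by linarith [hfin]
end

section
/- Let A be an n×n real symmetric matrix with eigenvalues λ_1 ≥ ⋯ ≥ λ_n, and let a_1 > λ_1 with a_1 ≥ 0 and 0 < a_1 − λ_1 ≤ T. Then ∫_{−T}^{T} √(a_1² + t²) / min_{1≤i≤n} ((a_1 − λ_i)² + t²) dt ≤ π a_1/(a_1 − λ_1) + 4 log(3T/(a_1 − λ_1)). -/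
open Real

set_option maxHeartbeats 1000000 in
/-- Integral over the right vertical segment: if `a₁ > λ₁`, `a₁ ≥ 0`
and `0 < a₁ − λ₁ ≤ T`, then
`∫_{−T}^{T} √(a₁²+t²) / min_i ((a₁−λᵢ)²+t²) dt ≤ π a₁/(a₁−λ₁) + 4 log(3T/(a₁−λ₁))`.
Here `lam ⟨0, _⟩` is the largest eigenvalue `λ₁` of the symmetric matrix. -/
theorem stmt9 (n : ℕ) (hn : 0 < n)
    (lam : Fin n → ℝ)
    (hlam : ∀ i j : Fin n, i ≤ j → lam j ≤ lam i)
    (a₁ T : ℝ)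
    (ha₁ : lam ⟨0, hn⟩ < a₁) (ha₁0 : 0 ≤ a₁)
    (hT : a₁ - lam ⟨0, hn⟩ ≤ T) :
    (∫ t in (-T)..T,
        Real.sqrt (a₁ ^ 2 + t ^ 2) /
          Finset.univ.inf' ⟨⟨0, hn⟩, Finset.mem_univ _⟩
            (fun i : Fin n => (a₁ - lam i) ^ 2 + t ^ 2)) ≤
      π * a₁ / (a₁ - lam ⟨0, hn⟩) + 4 * Real.log (3 * T / (a₁ - lam ⟨0, hn⟩)) := by
  obtain ⟨δ, hδdef⟩ : ∃ d : ℝ, a₁ - lam ⟨0, hn⟩ = d := ⟨_, rfl⟩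
  rw [hδdef] at hT ⊢
  have hδ : 0 < δ := hδdef ▸ sub_pos.mpr ha₁
  have hT0 : 0 < T := lt_of_lt_of_le hδ hT
  have hne : ((Finset.univ : Finset (Fin n))).Nonempty := ⟨⟨0, hn⟩, Finset.mem_univ _⟩
  -- the inf equals δ² + t²
  have hinf : ∀ t : ℝ,
      (Finset.univ.inf' hne
        (fun i : Fin n => (a₁ - lam i) ^ 2 + t ^ 2)) = δ ^ 2 + t ^ 2 := by
    intro t
    apply le_antisymm
    · rw [← hδdef]
      exact Finset.inf'_le (fun i : Fin n => (a₁ - lam i) ^ 2 + t ^ 2)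
        (Finset.mem_univ (⟨0, hn⟩ : Fin n))
    · apply Finset.le_inf'
      intro i _
      have h0i : (⟨0, hn⟩ : Fin n) ≤ i := by
        rw [Fin.le_def]
        exact Nat.zero_le _
      have h1 : lam i ≤ lam ⟨0, hn⟩ := hlam _ i h0i
      have h2 : δ ≤ a₁ - lam i := by rw [← hδdef]; linarith
      nlinarith [hδ.le]
  simp only [hinf]
  set f : ℝ → ℝ := fun t => Real.sqrt (a₁ ^ 2 + t ^ 2) / (δ ^ 2 + t ^ 2) with hf
  have hden : ∀ t : ℝ, (0 : ℝ) < δ ^ 2 + t ^ 2 := fun t => by positivity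
  have hfc : Continuous f := by
    apply Continuous.div
    · exact (continuous_const.add (continuous_pow 2)).sqrt
    · exact continuous_const.add (continuous_pow 2)
    · exact fun t => (hden t).ne'
  have heven : ∀ x : ℝ, f (-x) = f x := by intro x; simp [hf, neg_sq]
  -- split integral: ∫_{-T}^{T} = 2 ∫_0^T
  have hsplit : (∫ t in (-T)..T, f t) = 2 * ∫ t in (0:ℝ)..T, f t := by
    rw [← intervalIntegral.integral_add_adjacent_intervals
        (hfc.intervalIntegrable (-T) 0) (hfc.intervalIntegrable 0 T)]
    have h1 : (∫ t in (-T)..(0:ℝ), f t) = ∫ t in (0:ℝ)..T, f t := by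
      have h := intervalIntegral.integral_comp_neg (a := (0:ℝ)) (b := T) f
      simp only [neg_zero] at h
      rw [← h]
      simp only [heven]
    rw [h1]; ring
  rw [hsplit]
  -- bound f by g on [0, T]
  set g : ℝ → ℝ := fun t => a₁ / (δ ^ 2 + t ^ 2) + t / (δ ^ 2 + t ^ 2) with hg
  have hgc : Continuous g := by
    apply Continuous.add
    · exact continuous_const.div (continuous_const.add (continuous_pow 2))
        (fun t => (hden t).ne')
    · exact continuous_id.div (continuous_const.add (continuous_pow 2))
        (fun t => (hden t).ne')
  have hmono : (∫ t in (0:ℝ)..T, f t) ≤ ∫ t in (0:ℝ)..T, g t := by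
    apply intervalIntegral.integral_mono_on hT0.le
      (hfc.intervalIntegrable 0 T) (hgc.intervalIntegrable 0 T)
    intro t ht
    have ht0 : 0 ≤ t := ht.1
    have hsq : Real.sqrt (a₁ ^ 2 + t ^ 2) ≤ a₁ + t := by
      rw [show a₁ + t = Real.sqrt ((a₁ + t) ^ 2) from (Real.sqrt_sq (by linarith)).symm]
      exact Real.sqrt_le_sqrt (by nlinarith)
    have h2 : f t ≤ (a₁ + t) / (δ ^ 2 + t ^ 2) :=
      (div_le_div_iff_of_pos_right (hden t)).mpr hsq
    calc f t ≤ (a₁ + t) / (δ ^ 2 + t ^ 2) := h2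
      _ = g t := by rw [hg]; ring
  -- compute ∫ g
  have hc1 : Continuous (fun t : ℝ => a₁ / (δ ^ 2 + t ^ 2)) :=
    Continuous.div continuous_const (by continuity) (fun t => (hden t).ne')
  have hc2 : Continuous (fun t : ℝ => t / (δ ^ 2 + t ^ 2)) :=
    Continuous.div continuous_id (by continuity) (fun t => (hden t).ne')
  have hI1 : (∫ t in (0:ℝ)..T, a₁ / (δ ^ 2 + t ^ 2)) =
      a₁ / δ * Real.arctan (T / δ) := by
    have hderiv : ∀ t ∈ Set.uIcc (0:ℝ) T,
        HasDerivAt (fun t => a₁ / δ * Real.arctan (t / δ))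
          (a₁ / (δ ^ 2 + t ^ 2)) t := by
      intro t _
      have h1 : HasDerivAt (fun t : ℝ => t / δ) (1 / δ) t := by
        simpa using (hasDerivAt_id t).div_const δ
      have h2 : HasDerivAt (fun t : ℝ => Real.arctan (t / δ))
          (1 / (1 + (t / δ) ^ 2) * (1 / δ)) t :=
        by have := (Real.hasDerivAt_arctan (t / δ)).comp t h1; exact this
      have h3 := h2.const_mul (a₁ / δ)
      convert h3 using 1
      case e'_4 => rfl
      case e'_5 => rfl
      have hδne : δ ≠ 0 := hδ.ne'
      field_simp
    rw [intervalIntegral.integral_eq_sub_of_hasDerivAt hderiv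
        (hc1.intervalIntegrable 0 T)]
    simp
  have hI2 : (∫ t in (0:ℝ)..T, t / (δ ^ 2 + t ^ 2)) =
      (Real.log (δ ^ 2 + T ^ 2) - Real.log (δ ^ 2)) / 2 := by
    have hderiv : ∀ t ∈ Set.uIcc (0:ℝ) T,
        HasDerivAt (fun t => Real.log (δ ^ 2 + t ^ 2) / 2)
          (t / (δ ^ 2 + t ^ 2)) t := by
      intro t _
      have h1 : HasDerivAt (fun t : ℝ => δ ^ 2 + t ^ 2) (2 * t) t := by
        simpa using (hasDerivAt_pow 2 t).const_add (δ ^ 2)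
      have h2 : HasDerivAt (fun t : ℝ => Real.log (δ ^ 2 + t ^ 2))
          (2 * t / (δ ^ 2 + t ^ 2)) t := h1.log (hden t).ne'
      have h3 := h2.div_const 2
      convert h3 using 1
      case e'_4 => rfl
      case e'_5 => rfl
      have hdne := (hden t).ne'
      field_simp
    rw [intervalIntegral.integral_eq_sub_of_hasDerivAt hderiv
        (hc2.intervalIntegrable 0 T)]
    simp
    ring
  have hgsum : (∫ t in (0:ℝ)..T, g t) =
      a₁ / δ * Real.arctan (T / δ) +
        (Real.log (δ ^ 2 + T ^ 2) - Real.log (δ ^ 2)) / 2 := by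
    simp only [hg]
    rw [intervalIntegral.integral_add (hc1.intervalIntegrable 0 T)
      (hc2.intervalIntegrable 0 T), hI1, hI2]
  -- final estimates
  have harctan : Real.arctan (T / δ) ≤ π / 2 := (Real.arctan_lt_pi_div_two _).le
  have hbound1 : 2 * (a₁ / δ * Real.arctan (T / δ)) ≤ π * a₁ / δ := by
    have ha : 0 ≤ a₁ / δ := div_nonneg ha₁0 hδ.le
    have := mul_le_mul_of_nonneg_left harctan ha
    calc 2 * (a₁ / δ * Real.arctan (T / δ)) = 2 * (a₁ / δ * Real.arctan (T / δ)) := rfl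
      _ ≤ 2 * (a₁ / δ * (π / 2)) := by nlinarith
      _ = π * a₁ / δ := by ring
  have hbound2 : Real.log (δ ^ 2 + T ^ 2) - Real.log (δ ^ 2) ≤
      4 * Real.log (3 * T / δ) := by
    have h1 : Real.log (δ ^ 2 + T ^ 2) - Real.log (δ ^ 2) =
        Real.log ((δ ^ 2 + T ^ 2) / δ ^ 2) := by
      rw [Real.log_div (by positivity) (by positivity)]
    have h2 : 4 * Real.log (3 * T / δ) = Real.log ((3 * T / δ) ^ 4) := by
      rw [Real.log_pow]; push_cast; ring
    rw [h1, h2]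
    apply Real.log_le_log (by positivity)
    rw [div_le_iff₀ (by positivity)]
    have hδT : δ ≤ T := hT
    have h4 : (3 * T / δ) ^ 4 = 81 * T ^ 4 / δ ^ 4 := by ring
    rw [h4, div_mul_eq_mul_div, le_div_iff₀ (by positivity)]
    have hδ2 : δ ^ 2 ≤ T ^ 2 := by nlinarith
    nlinarith [mul_nonneg (pow_nonneg hδ.le 4) (sub_nonneg.mpr hδ2),
      mul_nonneg (mul_nonneg (pow_nonneg hδ.le 2) (sub_nonneg.mpr hδ2))
        (sq_nonneg T),
      mul_nonneg (pow_nonneg hT0.le 4) (pow_nonneg hδ.le 2)]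
  calc 2 * ∫ t in (0:ℝ)..T, f t ≤ 2 * ∫ t in (0:ℝ)..T, g t := by linarith
    _ = 2 * (a₁ / δ * Real.arctan (T / δ)) +
        (Real.log (δ ^ 2 + T ^ 2) - Real.log (δ ^ 2)) := by rw [hgsum]; ring
    _ ≤ π * a₁ / δ + 4 * Real.log (3 * T / δ) := by linarith
end

section
/- Let A, E be n×n real symmetric matrices, Ã := A + E, and let 1 ≤ k < p < n be such that the top-p singular values of A are exactly {λ_1, …, λ_k} ∪ {|λ_{n−(p−k)+1}|, …, |λ_n|}, with λ_k > 0 ≥ λ_{n−(p−k)+1}. If 2‖E‖ < σ_p − σ_{p+1}, then λ̃_k > |λ̃_{n−(p−k)}| and |λ̃_{n−(p−k)+1}| > λ̃_{k+1}; consequently the indices of the p eigenvalues of Ã of largest absolute value are exactly {1, …, k} ∪ {n−(p−k)+1, …, n}. -/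
open Matrix Real

open Submodule Set Module

lemma sum_dp {n : ℕ} {ι : Type} [Fintype ι] (f : ι → Fin n → ℝ) (w : Fin n → ℝ) :
    (∑ i, f i) ⬝ᵥ w = ∑ i, f i ⬝ᵥ w := by
  simp only [dotProduct, Finset.sum_apply, Finset.sum_mul]
  exact Finset.sum_comm

lemma dp_sum {n : ℕ} {ι : Type} [Fintype ι] (w : Fin n → ℝ) (f : ι → Fin n → ℝ) :
    w ⬝ᵥ (∑ i, f i) = ∑ i, w ⬝ᵥ f i := by
  simp only [dotProduct, Finset.sum_apply, Finset.mul_sum]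
  exact Finset.sum_comm

/-- quadratic form lower bound on a span of eigenvectors -/
lemma quadLB {n : ℕ} (A : Matrix (Fin n) (Fin n) ℝ) (lam : Fin n → ℝ)
    (v : Fin n → (Fin n → ℝ))
    (hv : ∀ i j : Fin n, v i ⬝ᵥ v j = if i = j then (1 : ℝ) else 0)
    (heig : ∀ i, A.mulVec (v i) = lam i • v i)
    {ι : Type} [Fintype ι] [DecidableEq ι] (f : ι → Fin n) (hf : Function.Injective f)
    (c : ℝ) (hc : ∀ j, c ≤ lam (f j)) (x : Fin n → ℝ)
    (hx : x ∈ Submodule.span ℝ (Set.range (fun j => v (f j)))) :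
    c * (x ⬝ᵥ x) ≤ x ⬝ᵥ A.mulVec x := by
  obtain ⟨w, hw⟩ := (mem_span_range_iff_exists_fun ℝ).mp hx
  have key : ∀ j j' : ι, v (f j) ⬝ᵥ v (f j') = if j = j' then (1:ℝ) else 0 := by
    intro j j'
    rw [hv]
    simp [hf.eq_iff]
  have hAx : A.mulVec x = ∑ j, w j • (lam (f j) • v (f j)) := by
    rw [← hw, ← Matrix.mulVecLin_apply, map_sum]
    simp [Matrix.mulVecLin_apply, heig, Matrix.mulVec_smul]
  have h1 : x ⬝ᵥ A.mulVec x = ∑ j, (w j)^2 * lam (f j) := by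
    rw [hAx, ← hw, sum_dp]
    congr 1
    ext j
    rw [smul_dotProduct, dp_sum]
    simp only [dotProduct_smul, key, smul_eq_mul, mul_ite, mul_one, mul_zero,
      Finset.sum_ite_eq, Finset.mem_univ, if_true]
    ring
  have h2 : x ⬝ᵥ x = ∑ j, (w j)^2 := by
    conv_lhs => rw [← hw]
    rw [sum_dp]
    congr 1
    ext j
    rw [smul_dotProduct, dp_sum]
    simp only [dotProduct_smul, key, smul_eq_mul, mul_ite, mul_one, mul_zero,
      Finset.sum_ite_eq, Finset.mem_univ, if_true]
    ring
  rw [h1, h2, Finset.mul_sum]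
  apply Finset.sum_le_sum
  intro j _
  rw [mul_comm]
  exact mul_le_mul_of_nonneg_left (hc j) (sq_nonneg _)

lemma dpE {n : ℕ} (E : Matrix (Fin n) (Fin n) ℝ) (x : Fin n → ℝ) :
    x ⬝ᵥ E.mulVec x ≤ specNormR E * (x ⬝ᵥ x) := by
  set y : EuclideanSpace ℝ (Fin n) := (WithLp.equiv 2 _).symm x with hy
  set T := Matrix.toEuclideanCLM (𝕜 := ℝ) E with hT
  have h1 : inner ℝ y (T y) = x ⬝ᵥ E.mulVec x := by
    rw [hT, hy, WithLp.equiv_symm_apply, Matrix.toEuclideanCLM_toLp,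
      EuclideanSpace.inner_toLp_toLp]
    simp [Matrix.toLin'_apply, dotProduct_comm]
  have h2 : inner ℝ y y = x ⬝ᵥ x := by
    rw [hy, WithLp.equiv_symm_apply, EuclideanSpace.inner_toLp_toLp]
    simp
  calc x ⬝ᵥ E.mulVec x = inner ℝ y (T y) := h1.symm
    _ ≤ ‖y‖ * ‖T y‖ := real_inner_le_norm y (T y)
    _ ≤ ‖y‖ * (‖T‖ * ‖y‖) :=
        mul_le_mul_of_nonneg_left (T.le_opNorm y) (norm_nonneg y)
    _ = ‖T‖ * (‖y‖ * ‖y‖) := by ring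
    _ = specNormR E * (x ⬝ᵥ x) := by
        rw [← real_inner_self_eq_norm_mul_norm, h2, specNormR, ← hT]

lemma ortho_li {n : ℕ} (v : Fin n → (Fin n → ℝ))
    (hv : ∀ i j : Fin n, v i ⬝ᵥ v j = if i = j then (1 : ℝ) else 0) :
    LinearIndependent ℝ v := by
  rw [Fintype.linearIndependent_iff]
  intro g hg j
  have h0 : (∑ i, g i • v i) ⬝ᵥ v j = g j := by
    rw [sum_dp]
    simp only [smul_dotProduct, hv, smul_eq_mul, mul_ite, mul_one, mul_zero,
      Finset.sum_ite_eq', Finset.mem_univ, if_true]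
  rw [hg] at h0
  simpa using h0.symm

lemma weyl_one {n : ℕ} (A E : Matrix (Fin n) (Fin n) ℝ)
    (lam : Fin n → ℝ) (u : Fin n → (Fin n → ℝ))
    (hlam : ∀ i j : Fin n, i ≤ j → lam j ≤ lam i)
    (hu : ∀ i j : Fin n, u i ⬝ᵥ u j = if i = j then (1 : ℝ) else 0)
    (heig : ∀ i, A.mulVec (u i) = lam i • u i)
    (tlam : Fin n → ℝ) (tu : Fin n → (Fin n → ℝ))
    (htlam : ∀ i j : Fin n, i ≤ j → tlam j ≤ tlam i)
    (htu : ∀ i j : Fin n, tu i ⬝ᵥ tu j = if i = j then (1 : ℝ) else 0)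
    (hteig : ∀ i, (A + E).mulVec (tu i) = tlam i • tu i)
    (i : Fin n) : tlam i ≤ lam i + specNormR E := by
  set U := span ℝ (range (fun j : ↥(Finset.Iic i) => tu (j : Fin n))) with hUdef
  set V := span ℝ (range (fun j : ↥(Finset.Ici i) => u (j : Fin n))) with hVdef
  have hU : finrank ℝ U = (i : ℕ) + 1 := by
    have h := finrank_span_eq_card (R := ℝ) ((ortho_li tu htu).comp
      (Subtype.val : ↥(Finset.Iic i) → Fin n) Subtype.val_injective)
    rw [Fintype.card_coe, Fin.card_Iic] at h
    exact h
  have hV : finrank ℝ V = n - (i : ℕ) := by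
    have h := finrank_span_eq_card (R := ℝ) ((ortho_li u hu).comp
      (Subtype.val : ↥(Finset.Ici i) → Fin n) Subtype.val_injective)
    rw [Fintype.card_coe, Fin.card_Ici] at h
    exact h
  have hsum := Submodule.finrank_sup_add_finrank_inf_eq U V
  have hle : finrank ℝ ↥(U ⊔ V) ≤ n := by
    have h2 := Submodule.finrank_le (R := ℝ) (M := Fin n → ℝ) (U ⊔ V)
    rwa [Module.finrank_fintype_fun_eq_card, Fintype.card_fin] at h2
  have hpos : 0 < finrank ℝ ↥(U ⊓ V) := by
    have hi := i.isLt
    omega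
  have hne : U ⊓ V ≠ ⊥ := by
    intro h
    rw [h, finrank_bot] at hpos
    exact lt_irrefl 0 hpos
  obtain ⟨x, hx, hx0⟩ := Submodule.exists_mem_ne_zero_of_ne_bot hne
  have hS : 0 < x ⬝ᵥ x := by
    rcases lt_or_eq_of_le (Finset.sum_nonneg fun j _ => mul_self_nonneg (x j)) with h | h
    · exact h
    · exact absurd (dotProduct_self_eq_zero.mp h.symm) hx0
  have hx1 : tlam i * (x ⬝ᵥ x) ≤ x ⬝ᵥ (A + E).mulVec x :=
    quadLB (A + E) tlam tu htu hteig (fun j : ↥(Finset.Iic i) => (j : Fin n))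
      Subtype.val_injective (tlam i)
      (fun j => htlam (j : Fin n) i (Finset.mem_Iic.mp j.2)) x hx.1
  have heig' : ∀ j, (-A).mulVec (u j) = (-lam j) • u j := by
    intro j
    rw [Matrix.neg_mulVec, heig, neg_smul]
  have hx2' : (-lam i) * (x ⬝ᵥ x) ≤ x ⬝ᵥ (-A).mulVec x :=
    quadLB (-A) (fun j => -lam j) u hu heig' (fun j : ↥(Finset.Ici i) => (j : Fin n))
      Subtype.val_injective (-lam i)
      (fun j => neg_le_neg (hlam i (j : Fin n) (Finset.mem_Ici.mp j.2))) x hx.2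
  have hx2 : x ⬝ᵥ A.mulVec x ≤ lam i * (x ⬝ᵥ x) := by
    rw [Matrix.neg_mulVec, dotProduct_neg] at hx2'
    linarith
  have hx3 : x ⬝ᵥ E.mulVec x ≤ specNormR E * (x ⬝ᵥ x) := dpE E x
  have hsplit : x ⬝ᵥ (A + E).mulVec x = x ⬝ᵥ A.mulVec x + x ⬝ᵥ E.mulVec x := by
    rw [Matrix.add_mulVec, dotProduct_add]
  have : tlam i * (x ⬝ᵥ x) ≤ (lam i + specNormR E) * (x ⬝ᵥ x) := by
    rw [add_mul]
    linarith
  exact le_of_mul_le_mul_right this hS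

lemma weyl_abs {n : ℕ} (A E : Matrix (Fin n) (Fin n) ℝ)
    (lam : Fin n → ℝ) (u : Fin n → (Fin n → ℝ))
    (hlam : ∀ i j : Fin n, i ≤ j → lam j ≤ lam i)
    (hu : ∀ i j : Fin n, u i ⬝ᵥ u j = if i = j then (1 : ℝ) else 0)
    (heig : ∀ i, A.mulVec (u i) = lam i • u i)
    (tlam : Fin n → ℝ) (tu : Fin n → (Fin n → ℝ))
    (htlam : ∀ i j : Fin n, i ≤ j → tlam j ≤ tlam i)
    (htu : ∀ i j : Fin n, tu i ⬝ᵥ tu j = if i = j then (1 : ℝ) else 0)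
    (hteig : ∀ i, (A + E).mulVec (tu i) = tlam i • tu i)
    (i : Fin n) : |tlam i - lam i| ≤ specNormR E := by
  have h1 := weyl_one A E lam u hlam hu heig tlam tu htlam htu hteig i
  have hAE : (A + E) + (-E) = A := by abel
  have heig2 : ∀ j, ((A + E) + (-E)).mulVec (u j) = lam j • u j := by
    intro j; rw [hAE]; exact heig j
  have h2 := weyl_one (A + E) (-E) tlam tu htlam htu hteig lam u hlam hu heig2 i
  have hnorm : specNormR (-E) = specNormR E := by
    unfold specNormR; rw [map_neg, norm_neg]
  rw [hnorm] at h2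
  rw [abs_le]
  constructor <;> linarith
/-- If `2‖E‖ < σ_p − σ_{p+1}` then `λ̃_k > |λ̃_{n−(p−k)}|` and
`|λ̃_{n−(p−k)+1}| > λ̃_{k+1}`; consequently the indices of the `p` eigenvalues of `Ã`
of largest absolute value are exactly `S = {1,…,k} ∪ {n−(p−k)+1,…,n}`
(0-based: `{i | i < k ∨ n−(p−k) ≤ i}`). Indices are 1-based in the informal statement. -/
theorem stmt12 (n p k : ℕ) (hk : 1 ≤ k) (hkp : k < p) (hpn : p < n)
    (A E : Matrix (Fin n) (Fin n) ℝ)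
    (hA : A.IsSymm) (hE : E.IsSymm)
    -- spectral data of `A`
    (lam : Fin n → ℝ) (u : Fin n → (Fin n → ℝ))
    (hlam : ∀ i j : Fin n, i ≤ j → lam j ≤ lam i)
    (hu : ∀ i j : Fin n, u i ⬝ᵥ u j = if i = j then (1 : ℝ) else 0)
    (heig : ∀ i, A.mulVec (u i) = lam i • u i)
    -- spectral data of `Ã = A + E`
    (tlam : Fin n → ℝ) (tu : Fin n → (Fin n → ℝ))
    (htlam : ∀ i j : Fin n, i ≤ j → tlam j ≤ tlam i)
    (htu : ∀ i j : Fin n, tu i ⬝ᵥ tu j = if i = j then (1 : ℝ) else 0)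
    (hteig : ∀ i, (A + E).mulVec (tu i) = tlam i • tu i)
    -- singular values of `A`: the `|λ_i|` sorted decreasingly, via a permutation `e`
    (sigma : Fin n → ℝ) (e : Equiv.Perm (Fin n))
    (hsigma_mono : ∀ i j : Fin n, i ≤ j → sigma j ≤ sigma i)
    (hsigma : ∀ i, sigma i = |lam (e i)|)
    -- the top-`p` singular values of `A` are exactly those indexed by `S`
    (htop : ∀ i : Fin n, (i : ℕ) < p ↔ (((e i : Fin n) : ℕ) < k ∨ n - (p - k) ≤ ((e i : Fin n) : ℕ)))
    -- sign pattern: `λ_k > 0 ≥ λ_{n−(p−k)+1}`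
    (hpos : 0 < lam ⟨k - 1, by omega⟩)
    (hneg : lam ⟨n - (p - k), by omega⟩ ≤ 0)
    -- gap condition
    (hgapσ : 2 * specNormR E < sigma ⟨p - 1, by omega⟩ - sigma ⟨p, hpn⟩) :
    tlam ⟨k - 1, by omega⟩ > |tlam ⟨n - (p - k) - 1, by omega⟩| ∧
      |tlam ⟨n - (p - k), by omega⟩| > tlam ⟨k, by omega⟩ ∧
      ∀ i j : Fin n,
        ((i : ℕ) < k ∨ n - (p - k) ≤ (i : ℕ)) →
        ¬ ((j : ℕ) < k ∨ n - (p - k) ≤ (j : ℕ)) →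
        |tlam j| < |tlam i| := by
  have hW : ∀ i, |tlam i - lam i| ≤ specNormR E :=
    weyl_abs A E lam u hlam hu heig tlam tu htlam htu hteig
  set ε := specNormR E with hε
  have hε0 : 0 ≤ ε := norm_nonneg _
  set σ1 := sigma ⟨p - 1, by omega⟩ with hσ1
  set σ2 := sigma ⟨p, hpn⟩ with hσ2
  have hσ2nn : 0 ≤ σ2 := by rw [hσ2, hsigma]; exact abs_nonneg _
  -- σ1 lower-bounds |lam i| for i ∈ S
  have hS1 : ∀ i : Fin n, ((i : ℕ) < k ∨ n - (p - k) ≤ (i : ℕ)) → σ1 ≤ |lam i| := by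
    intro i hi
    have h1 : ((e.symm i : Fin n) : ℕ) < p := by
      rw [htop]
      simpa [Equiv.apply_symm_apply] using hi
    have h2 : (e.symm i : Fin n) ≤ ⟨p - 1, by omega⟩ := by
      rw [Fin.le_def]; simp; omega
    calc σ1 ≤ sigma (e.symm i) := hsigma_mono _ _ h2
      _ = |lam i| := by rw [hsigma, Equiv.apply_symm_apply]
  have hS2 : ∀ j : Fin n, ¬ ((j : ℕ) < k ∨ n - (p - k) ≤ (j : ℕ)) → |lam j| ≤ σ2 := by
    intro j hj
    have h1 : ¬ ((e.symm j : Fin n) : ℕ) < p := by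
      rw [htop]
      simpa [Equiv.apply_symm_apply] using hj
    have h2 : (⟨p, hpn⟩ : Fin n) ≤ e.symm j := by
      rw [Fin.le_def]; simp; omega
    calc |lam j| = sigma (e.symm j) := by rw [hsigma, Equiv.apply_symm_apply]
      _ ≤ σ2 := hsigma_mono _ _ h2
  -- perturbed bounds
  have hout : ∀ j : Fin n, ¬ ((j : ℕ) < k ∨ n - (p - k) ≤ (j : ℕ)) → |tlam j| ≤ σ2 + ε := by
    intro j hj
    have := hW j
    have := hS2 j hj
    have habs : |tlam j| - |lam j| ≤ |tlam j - lam j| := abs_sub_abs_le_abs_sub _ _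
    linarith
  have hin : ∀ i : Fin n, ((i : ℕ) < k ∨ n - (p - k) ≤ (i : ℕ)) → σ1 - ε ≤ |tlam i| := by
    intro i hi
    have := hW i
    have := hS1 i hi
    have habs : |lam i| - |tlam i| ≤ |lam i - tlam i| := abs_sub_abs_le_abs_sub _ _
    rw [abs_sub_comm] at habs
    linarith
  have hgap : σ2 + ε < σ1 - ε := by rw [hσ1, hσ2] at *; linarith
  refine ⟨?_, ?_, ?_⟩
  · -- tlam (k-1) > |tlam (n-(p-k)-1)|
    have hmem : ((⟨k - 1, by omega⟩ : Fin n) : ℕ) < k ∨ n - (p - k) ≤ ((⟨k - 1, by omega⟩ : Fin n) : ℕ) := by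
      left; simp; omega
    have hnmem : ¬ (((⟨n - (p - k) - 1, by omega⟩ : Fin n) : ℕ) < k ∨
        n - (p - k) ≤ ((⟨n - (p - k) - 1, by omega⟩ : Fin n) : ℕ)) := by
      simp; omega
    have h1 := hS1 _ hmem
    rw [abs_of_pos hpos] at h1
    have h2 := hW ⟨k - 1, by omega⟩
    rw [abs_le] at h2
    have h3 := hout _ hnmem
    linarith
  · -- |tlam m| > tlam k
    have hmem : ((⟨n - (p - k), by omega⟩ : Fin n) : ℕ) < k ∨
        n - (p - k) ≤ ((⟨n - (p - k), by omega⟩ : Fin n) : ℕ) := by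
      right; simp
    have hnmem : ¬ (((⟨k, by omega⟩ : Fin n) : ℕ) < k ∨
        n - (p - k) ≤ ((⟨k, by omega⟩ : Fin n) : ℕ)) := by
      simp; omega
    have h1 := hS1 _ hmem
    rw [abs_of_nonpos hneg] at h1
    have h2 := hW ⟨n - (p - k), by omega⟩
    rw [abs_le] at h2
    have h3 := hout _ hnmem
    have h4 : tlam ⟨k, by omega⟩ ≤ |tlam ⟨k, by omega⟩| := le_abs_self _
    have h5 : tlam ⟨n - (p - k), by omega⟩ ≤ -(σ1 - ε) := by linarith
    have h6 : σ1 - ε ≤ |tlam ⟨n - (p - k), by omega⟩| := by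
      rw [abs_of_nonpos (by linarith)]
      linarith
    linarith
  · intro i j hi hj
    have h1 := hin i hi
    have h2 := hout j hj
    linarith
end
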